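/- arXiv:1409.5685 — 3 statements merged into one kernel-verified Lean document; each statement's English description precedes it below -/
import Mathlib

section
/- For every integer m > 4, there exists a positive integer n such that π(m·n) = m + n. -/
/-- The k-th prime, 1-indexed: `nthPrime 1 = 2`. -/
noncomputable def nthPrime (k : ℕ) : ℕ := Nat.nth Nat.Prime (k - 1)

/-- `IsS m S` says that `S` is the maximum of `{k*m - p_k : k ≥ 1}`. -/
def IsS (m : ℕ) (S : ℤ) : Prop :=
  IsGreatest {a : ℤ | ∃ k : ℕ, 0 < k ∧ a = (k : ℤ) * m - nthPrime k} S

open Nat Finset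

-- basic facts
lemma pi_eq_count (x : ℕ) : Nat.primeCounting x = Nat.count Nat.Prime (x+1) := rfl

lemma pi_nthPrime {k : ℕ} (hk : 0 < k) : Nat.primeCounting (nthPrime k) = k := by
  rw [nthPrime, pi_eq_count, Nat.count_succ,
    Nat.count_nth_of_infinite Nat.infinite_setOf_prime]
  simp only [Nat.prime_nth_prime, if_true]
  omega

lemma nthPrime_le_of_le_pi {x k : ℕ} (hk : 0 < k) (h : k ≤ Nat.primeCounting x) :
    nthPrime k ≤ x := by
  have : k - 1 < Nat.count Nat.Prime (x+1) := by
    have := pi_eq_count x ▸ h; omega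
  have := Nat.nth_lt_of_lt_count this
  rw [nthPrime]; omega

lemma succ_le_nthPrime (k : ℕ) (hk : 0 < k) : k + 1 ≤ nthPrime k := by
  have := Nat.add_two_le_nth_prime (k-1)
  rw [nthPrime]; omega

lemma pi_le_self (x : ℕ) : Nat.primeCounting x ≤ x + 1 := by
  rw [pi_eq_count]; exact Nat.count_le _

lemma pi_eq_card (x : ℕ) : Nat.primeCounting x = ((x+1).primesBelow).card :=
  (Nat.primesBelow_card_eq_primeCounting' (x+1)).symm

lemma primesBelow_subset {a b : ℕ} (h : a ≤ b) : a.primesBelow ⊆ b.primesBelow := by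
  intro p hp
  rw [Nat.mem_primesBelow] at *
  exact ⟨hp.1.trans_le h, hp.2⟩

lemma upper_step (N : ℕ) :
    N ^ (Nat.primeCounting (2*N) - Nat.primeCounting N) ≤ 4 ^ (2*N) := by
  set S : Finset ℕ := (2*N+1).primesBelow \ (N+1).primesBelow with hS
  have hsub : (N+1).primesBelow ⊆ (2*N+1).primesBelow := primesBelow_subset (by omega)
  have hcard : S.card = Nat.primeCounting (2*N) - Nat.primeCounting N := by
    rw [hS, Finset.card_sdiff_of_subset hsub, pi_eq_card, pi_eq_card]
  have h1 : N ^ S.card ≤ ∏ p ∈ S, p := by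
    apply Finset.pow_card_le_prod
    intro p hp
    rw [hS, Finset.mem_sdiff, Nat.mem_primesBelow] at hp
    have : ¬ (p < N + 1) := fun hlt => hp.2 (Nat.mem_primesBelow.mpr ⟨hlt, hp.1.2⟩)
    omega
  have h2 : ∏ p ∈ S, p ≤ ∏ p ∈ (2*N+1).primesBelow, p := by
    apply Finset.prod_le_prod_of_subset_of_one_le' (Finset.sdiff_subset)
    intro p hp _
    exact (Nat.prime_of_mem_primesBelow hp).one_lt.le
  have h3 : ∏ p ∈ (2*N+1).primesBelow, p = primorial (2*N) := by
    rfl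
  calc N ^ (Nat.primeCounting (2*N) - Nat.primeCounting N) = N ^ S.card := by rw [hcard]
    _ ≤ ∏ p ∈ S, p := h1
    _ ≤ ∏ p ∈ (2*N+1).primesBelow, p := h2
    _ = primorial (2*N) := h3
    _ ≤ 4 ^ (2*N) := primorial_le_4_pow (2*N)

lemma pi_two_pow (s : ℕ) (hs : 1 ≤ s) : Nat.primeCounting (2^s) * s ≤ 16 * 2^s := by
  induction s with
  | zero => omega
  | succ s ih =>
    rcases Nat.eq_or_lt_of_le hs with h1 | h1
    · have h0 : s = 0 := by omega
      subst h0; decide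
    · have hs1 : 1 ≤ s := by omega
      have IH := ih hs1
      set N := 2^s with hN
      have h2N : 2^(s+1) = 2*N := by rw [hN]; ring
      set c := Nat.primeCounting (2*N) - Nat.primeCounting N with hc
      have hmono : Nat.primeCounting N ≤ Nat.primeCounting (2*N) :=
        Nat.monotone_primeCounting (by omega)
      have hstep : N ^ c ≤ 4 ^ (2*N) := upper_step N
      have hsc : s * c ≤ 4 * N := by
        have : (2:ℕ) ^ (s*c) ≤ 2 ^ (4*N) := by
          calc (2:ℕ)^(s*c) = (2^s)^c := by rw [pow_mul]
            _ ≤ 4^(2*N) := hstep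
            _ = 2^(4*N) := by rw [show (4:ℕ) = 2^2 by norm_num, ← pow_mul]; ring_nf
        have := (Nat.pow_le_pow_iff_right (by norm_num : 1 < 2)).mp this
        omega
      have hpiN : Nat.primeCounting N ≤ N + 1 := pi_le_self N
      have hc4 : c ≤ 4 * N := by nlinarith
      have : Nat.primeCounting (2*N) = Nat.primeCounting N + c := by omega
      rw [h2N, this]
      have hN1 : 1 ≤ N := Nat.one_le_two_pow
      nlinarith [IH, hsc, hpiN, hc4]

lemma pi_upper (x : ℕ) (hx : 2 ≤ x) : Nat.primeCounting x * (Nat.log 2 x + 1) ≤ 32 * x := by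
  set s := Nat.log 2 x with hs
  have hs1 : 1 ≤ s := by
    have h21 : Nat.log 2 (2^1) = 1 := Nat.log_pow (by norm_num) 1
    rw [hs]
    calc 1 = Nat.log 2 (2^1) := h21.symm
      _ ≤ Nat.log 2 x := Nat.log_mono_right (by norm_num; omega)
  have hxlt : x < 2^(s+1) := Nat.lt_pow_succ_log_self (by norm_num) x
  have hxge : 2^s ≤ x := Nat.pow_log_le_self 2 (by omega)
  have h1 : Nat.primeCounting x ≤ Nat.primeCounting (2^(s+1)) :=
    Nat.monotone_primeCounting (by omega)
  have h2 := pi_two_pow (s+1) (by omega)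
  calc Nat.primeCounting x * (s+1) ≤ Nat.primeCounting (2^(s+1)) * (s+1) :=
        Nat.mul_le_mul_right _ h1
    _ ≤ 16 * 2^(s+1) := h2
    _ = 32 * 2^s := by ring
    _ ≤ 32 * x := by omega

lemma pi_lt_of_big {m k : ℕ} (hm : 0 < m) (hk : 2^(32*m) ≤ k) :
    Nat.primeCounting (m*k) < k := by
  have h2p : (2:ℕ) ≤ 2^(32*m) := by
    calc (2:ℕ) = 2^1 := rfl
      _ ≤ 2^(32*m) := Nat.pow_le_pow_right (by norm_num) (by omega)
  have hx2 : 2 ≤ m * k := by nlinarith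
  have hslog : 32*m ≤ Nat.log 2 (m*k) := by
    calc 32*m = Nat.log 2 (2^(32*m)) := (Nat.log_pow (by norm_num) _).symm
      _ ≤ Nat.log 2 (m*k) := Nat.log_mono_right (by nlinarith)
  by_contra hcon
  push_neg at hcon
  have h1 : k * (32*m+1) ≤ Nat.primeCounting (m*k) * (Nat.log 2 (m*k) + 1) :=
    Nat.mul_le_mul hcon (by omega)
  have h2 := pi_upper (m*k) hx2
  have hk0 : 0 < k := by omega
  nlinarith

lemma centralBinom_le_pow (N : ℕ) (hN : 0 < N) :
    Nat.centralBinom N ≤ (2*N) ^ (Nat.primeCounting (2*N)) := by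
  set c := Nat.centralBinom N with hcdef
  have hc0 : c ≠ 0 := (Nat.centralBinom_pos N).ne'
  have hfac : c.factorization.prod (· ^ ·) = c := Nat.factorization_prod_pow_eq_self hc0
  have hsupp : c.factorization.support ⊆ (2*N+1).primesBelow := by
    intro p hp
    have hpp : p.Prime := Nat.prime_of_mem_primeFactors (by simpa using hp)
    have hν : 1 ≤ c.factorization p := by
      have := Finsupp.mem_support_iff.mp hp; omega
    have hple : p ≤ 2*N := by
      calc p = p^1 := (pow_one p).symm
        _ ≤ p ^ (c.factorization p) := Nat.pow_le_pow_right hpp.pos hν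
        _ ≤ 2*N := by
            rw [hcdef, Nat.centralBinom]
            exact Nat.pow_factorization_choose_le (by omega)
    exact Nat.mem_primesBelow.mpr ⟨by omega, hpp⟩
  have hprod : c.factorization.prod (· ^ ·) ≤ (2*N) ^ c.factorization.support.card := by
    rw [Finsupp.prod]
    apply Finset.prod_le_pow_card
    intro p hp
    rw [hcdef, Nat.centralBinom]
    exact Nat.pow_factorization_choose_le (by omega)
  have hcard : c.factorization.support.card ≤ Nat.primeCounting (2*N) := by
    rw [pi_eq_card]
    exact Finset.card_le_card hsupp
  calc c = c.factorization.prod (· ^ ·) := hfac.symm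
    _ ≤ (2*N) ^ c.factorization.support.card := hprod
    _ ≤ (2*N) ^ (Nat.primeCounting (2*N)) := Nat.pow_le_pow_right (by omega) hcard

lemma clog_lin (t : ℕ) (ht : 6 ≤ t) : 4*t + 2 < 2^(t-1) := by
  induction t with
  | zero => omega
  | succ t ih =>
    rcases Nat.lt_or_ge t 6 with h | h
    · interval_cases t <;> simp_all
    · have h1 := ih (by omega)
      have h2 : (2:ℕ)^(t-1) * 2 = 2^t := by
        rw [← pow_succ]; congr 1; omega
      have h3 : (4:ℕ) ≤ 2^(t-1) := by
        calc (4:ℕ) = 2^2 := rfl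
          _ ≤ 2^(t-1) := Nat.pow_le_pow_right (by norm_num) (by omega)
      have : t + 1 - 1 = t := by omega
      rw [this]
      omega

lemma clog_bound (m : ℕ) (hm : 23 ≤ m) : 4 * Nat.clog 2 m + 2 ≤ m := by
  rcases Nat.lt_or_ge m 33 with h | h
  · have : Nat.clog 2 m ≤ Nat.clog 2 32 := Nat.clog_mono_right 2 (by omega)
    have h32 : Nat.clog 2 32 = 5 := by
      rw [show (32:ℕ) = 2^5 by norm_num]
      exact Nat.clog_pow 2 5 (by norm_num)
    omega
  · have ht : 6 ≤ Nat.clog 2 m := by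
      have h5 := (Nat.lt_clog_iff_pow_lt (by norm_num : 1 < 2) (x := m) (y := 5)).mpr
        (by norm_num; omega)
      omega
    have hlt : 2 ^ (Nat.clog 2 m - 1) < m :=
      Nat.pow_pred_clog_lt_self (by norm_num) (by omega)
    have := clog_lin (Nat.clog 2 m) ht
    omega

set_option maxRecDepth 100000 in
lemma exists_pi_ge (m : ℕ) (hm : 4 < m) :
    ∃ n : ℕ, 0 < n ∧ m + n ≤ Nat.primeCounting (m*n) := by
  rcases Nat.lt_or_ge m 23 with hsmall | hbig
  · interval_cases m
    · exact ⟨9, by norm_num, by decide⟩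
    · exact ⟨7, by norm_num, by decide⟩
    · exact ⟨6, by norm_num, by decide⟩
    · exact ⟨6, by norm_num, by decide⟩
    · exact ⟨5, by norm_num, by decide⟩
    · exact ⟨5, by norm_num, by decide⟩
    · exact ⟨5, by norm_num, by decide⟩
    · exact ⟨5, by norm_num, by decide⟩
    · exact ⟨5, by norm_num, by decide⟩
    · exact ⟨5, by norm_num, by decide⟩
    · exact ⟨5, by norm_num, by decide⟩
    · exact ⟨5, by norm_num, by decide⟩
    · exact ⟨5, by norm_num, by decide⟩
    · exact ⟨5, by norm_num, by decide⟩
    · exact ⟨5, by norm_num, by decide⟩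
    · exact ⟨5, by norm_num, by decide⟩
    · exact ⟨5, by norm_num, by decide⟩
    · exact ⟨5, by norm_num, by decide⟩
  · set t := Nat.clog 2 m with ht
    refine ⟨2^(t+1), by positivity, ?_⟩
    set n := 2^(t+1) with hn
    set N := m * 2^t with hN
    have h2N : m * n = 2 * N := by rw [hn, hN]; ring
    have hm2t : m ≤ 2^t := Nat.le_pow_clog (by norm_num) m
    have hclog : 4*t + 2 ≤ m := clog_bound m hbig
    have hmn : m + 1 ≤ n := by
      have : 2*m ≤ 2*2^t := by omega
      rw [hn, pow_succ]; omega
    have hN4 : 4 ≤ N := by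
      have h1 : 1 ≤ 2^t := Nat.one_le_two_pow
      rw [hN]; nlinarith
    by_contra hcon
    push_neg at hcon
    rw [h2N] at hcon
    have hpi1 : Nat.primeCounting (2*N) + 1 ≤ m + n := by omega
    have h4 : 4^N < N * Nat.centralBinom N :=
      Nat.four_pow_lt_mul_centralBinom N hN4
    have h5 : N * Nat.centralBinom N ≤ (2*N) ^ (Nat.primeCounting (2*N) + 1) := by
      rw [pow_succ]
      exact Nat.mul_le_mul (by omega) (centralBinom_le_pow N (by omega))
      |>.trans (le_of_eq (mul_comm _ _))
    have h6 : (2*N : ℕ) ≤ 2^(2*t+1) := by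
      have : 2*N = m * 2^(t+1) := by rw [hN]; ring
      rw [this]
      calc m * 2^(t+1) ≤ 2^t * 2^(t+1) := Nat.mul_le_mul_right _ hm2t
        _ = 2^(2*t+1) := by rw [← pow_add]; ring_nf
    have h7 : (4:ℕ)^N ≤ 2^((2*t+1)*(m+n)) := by
      have := h4.le
      calc (4:ℕ)^N ≤ N * Nat.centralBinom N := this
        _ ≤ (2*N) ^ (Nat.primeCounting (2*N) + 1) := h5
        _ ≤ (2*N) ^ (m+n) := Nat.pow_le_pow_right (by omega) hpi1
        _ ≤ (2^(2*t+1))^(m+n) := Nat.pow_le_pow_left h6 _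
        _ = 2^((2*t+1)*(m+n)) := by rw [← pow_mul]
    have h8 : (4:ℕ)^N = 2^(2*N) := by
      rw [show (4:ℕ) = 2^2 by norm_num, ← pow_mul]
    have h9 : 2*N ≤ (2*t+1)*(m+n) := by
      have := h8 ▸ h7
      exact (Nat.pow_le_pow_iff_right (by norm_num : 1 < 2)).mp this
    -- contradiction: 2*(2t+1)(m+n) ≤ m(m+n) = m² + mn < 2mn = 2(2N)
    have hmltn : m < n := by omega
    have hfin : 2*((2*t+1)*(m+n)) < 2*(2*N) := by
      have e1 : 2*((2*t+1)*(m+n)) ≤ m*(m+n) := by nlinarith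
      have e2 : m*m < m*n := by nlinarith
      have e3 : 2*(2*N) = 2*(m*n) := by omega
      nlinarith
    omega

theorem stmt10 (m : ℕ) (hm : 4 < m) :
    ∃ n : ℕ, 0 < n ∧ Nat.primeCounting (m * n) = m + n := by
  classical
  obtain ⟨n₀, hn₀, hpi₀⟩ := exists_pi_ge m hm
  set K := 2^(32*m) with hK
  let P : ℕ → Prop := fun k => 0 < k ∧ m*m + nthPrime k ≤ m*k
  have hbdd : ∀ k, P k → k < K := by
    intro k hk
    obtain ⟨hk0, hk1⟩ := hk
    by_contra hcon
    push_neg at hcon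
    have h1 : nthPrime k ≤ m*k := by omega
    have h2 : Nat.primeCounting (nthPrime k) = k := pi_nthPrime hk0
    have h3 : Nat.primeCounting (nthPrime k) ≤ Nat.primeCounting (m*k) :=
      Nat.monotone_primeCounting h1
    have h4 : Nat.primeCounting (m*k) < k := pi_lt_of_big (by omega) hcon
    omega
  set k₀ := Nat.primeCounting (m*n₀) with hk₀
  have hk0pos : 0 < k₀ := by omega
  have hmem : P k₀ := by
    refine ⟨hk0pos, ?_⟩
    have hp : nthPrime k₀ ≤ m*n₀ := nthPrime_le_of_le_pi hk0pos le_rfl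
    have h1 : m*(m+n₀) ≤ m*k₀ := Nat.mul_le_mul_left m hpi₀
    nlinarith
  set j := Nat.findGreatest P K with hj'
  have hPj : P j := Nat.findGreatest_spec (le_of_lt (hbdd _ hmem)) hmem
  have hnotj1 : ¬ P (j+1) := by
    rcases le_or_gt (j+1) K with h | h
    · exact Nat.findGreatest_is_greatest (by omega) h
    · intro hP
      exact absurd (hbdd _ hP) (by omega)
  obtain ⟨hj0, hj1⟩ := hPj
  have hpj_lb : j + 1 ≤ nthPrime j := succ_le_nthPrime j hj0
  have hjm : m + 1 ≤ j := by
    by_contra hc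
    push_neg at hc
    have : m*j ≤ m*m := Nat.mul_le_mul_left m (by omega)
    omega
  set n := j - m with hn
  have hjmn : j = m + n := by omega
  refine ⟨n, by omega, ?_⟩
  have hpj : nthPrime j ≤ m*n := by
    have hd : m*j = m*m + m*n := by rw [hjmn]; ring
    omega
  have hpj1 : m*n < nthPrime (j+1) := by
    have hnot : ¬ (0 < j+1 ∧ m*m + nthPrime (j+1) ≤ m*(j+1)) := hnotj1
    push_neg at hnot
    have h1 := hnot (by omega)
    have hd : m*(j+1) = m*m + m*n + m := by rw [hjmn]; ring
    omega
  have hge : j ≤ Nat.primeCounting (m*n) := by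
    calc j = Nat.primeCounting (nthPrime j) := (pi_nthPrime hj0).symm
      _ ≤ Nat.primeCounting (m*n) := Nat.monotone_primeCounting hpj
  have hle : Nat.primeCounting (m*n) ≤ j := by
    by_contra hc
    push_neg at hc
    have : nthPrime (j+1) ≤ m*n := nthPrime_le_of_le_pi (by omega) (by omega)
    omega
  omega
end

section
/- For every integer m ≥ 2, there exists an integer n > 1 such that n = m·π(n), i.e., n/π(n) = m. -/
open Finset

lemma bern (s : Finset ℕ) (f : ℕ → ℝ) (hf : ∀ i ∈ s, 0 ≤ f i) :
    1 + ∑ i ∈ s, f i ≤ ∏ i ∈ s, (1 + f i) := by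
  classical
  induction s using Finset.induction_on with
  | empty => simp
  | @insert a s hx ih =>
    rw [Finset.sum_insert hx, Finset.prod_insert hx]
    have h1 : 0 ≤ f a := hf a (Finset.mem_insert_self a s)
    have h2 : 1 + ∑ i ∈ s, f i ≤ ∏ i ∈ s, (1 + f i) :=
      ih fun i hi => hf i (Finset.mem_insert_of_mem hi)
    have h3 : 0 ≤ ∑ i ∈ s, f i :=
      Finset.sum_nonneg fun i hi => hf i (Finset.mem_insert_of_mem hi)
    nlinarith

lemma totient_prod_primes (s : Finset ℕ) (hs : ∀ p ∈ s, p.Prime) :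
    (∏ p ∈ s, p).totient = ∏ p ∈ s, (p - 1) := by
  classical
  induction s using Finset.induction_on with
  | empty => simp
  | @insert a s hx ih =>
    have ha : a.Prime := hs a (Finset.mem_insert_self a s)
    have hrest : ∀ p ∈ s, p.Prime := fun p hp => hs p (Finset.mem_insert_of_mem hp)
    have hcop : Nat.Coprime a (∏ p ∈ s, p) :=
      Nat.Coprime.prod_right fun p hp =>
        (Nat.coprime_primes ha (hrest p hp)).mpr (fun h => hx (h ▸ hp))
    rw [Finset.prod_insert hx, Finset.prod_insert hx, Nat.totient_mul hcop,
      Nat.totient_prime ha, ih hrest]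

lemma exists_totient (c : ℕ) : ∃ a : ℕ, 0 < a ∧ c * a.totient ≤ a := by
  have hdiv := not_summable_one_div_on_primes
  rw [not_summable_iff_tendsto_nat_atTop_of_nonneg
    (fun n => Set.indicator_nonneg (fun p _ => by positivity) n)] at hdiv
  obtain ⟨N, hN⟩ := (Filter.tendsto_atTop.mp hdiv (c : ℝ)).exists
  set s : Finset ℕ := N.primesBelow with hs
  have hsum : ∑ p ∈ s, (1 : ℝ) / p = ∑ i ∈ Finset.range N,
      Set.indicator {p | p.Prime} (fun n : ℕ => (1 : ℝ) / n) i := by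
    rw [hs, Nat.primesBelow, Finset.sum_filter]
    refine Finset.sum_congr rfl fun i _ => ?_
    by_cases hi : i.Prime
    · simp [hi, Set.indicator_of_mem, Set.mem_setOf_eq]
    · simp [hi, Set.indicator_of_notMem, Set.mem_setOf_eq]
  have hsp : ∀ p ∈ s, p.Prime := fun p hp => Nat.prime_of_mem_primesBelow hp
  refine ⟨∏ p ∈ s, p, Finset.prod_pos fun p hp => (hsp p hp).pos, ?_⟩
  rw [totient_prod_primes s hsp]
  -- work in ℝ
  have key : (c : ℝ) * ∏ p ∈ s, ((p : ℝ) - 1) ≤ ∏ p ∈ s, (p : ℝ) := by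
    have h1 : ∀ p ∈ s, ((p : ℝ) - 1) * (1 + 1 / p) ≤ p := by
      intro p hp
      have hp2 : (2 : ℝ) ≤ p := by exact_mod_cast (hsp p hp).two_le
      have hp0 : (0 : ℝ) < p := by linarith
      have h4 : ((p : ℝ) - 1) * (1 + 1 / p) = p - 1/p := by field_simp; ring
      have h5 : (0:ℝ) < 1/p := by positivity
      linarith
    calc (c : ℝ) * ∏ p ∈ s, ((p : ℝ) - 1)
        ≤ (1 + ∑ p ∈ s, (1:ℝ)/p) * ∏ p ∈ s, ((p : ℝ) - 1) := by
          refine mul_le_mul_of_nonneg_right ?_ (Finset.prod_nonneg fun p hp => by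
            have : (2:ℝ) ≤ p := by exact_mod_cast (hsp p hp).two_le
            linarith)
          rw [hsum]; linarith [hN]
      _ ≤ (∏ p ∈ s, (1 + (1:ℝ)/p)) * ∏ p ∈ s, ((p : ℝ) - 1) := by
          refine mul_le_mul_of_nonneg_right (bern s _ fun p hp => by positivity)
            (Finset.prod_nonneg fun p hp => by
              have : (2:ℝ) ≤ p := by exact_mod_cast (hsp p hp).two_le
              linarith)
      _ = ∏ p ∈ s, (((p:ℝ) - 1) * (1 + 1/p)) := by rw [mul_comm, ← Finset.prod_mul_distrib]
      _ ≤ ∏ p ∈ s, (p : ℝ) := Finset.prod_le_prod (fun p hp => by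
            have hp2 : (2 : ℝ) ≤ p := by exact_mod_cast (hsp p hp).two_le
            have hp0 : (0 : ℝ) < p := by linarith
            have h4 : ((p : ℝ) - 1) * (1 + 1 / p) = p - 1/p := by field_simp; ring
            have h6 : (1:ℝ)/p ≤ 1 := by rw [div_le_one hp0]; linarith
            rw [h4]; linarith) h1
  have hcast : ((∏ p ∈ s, (p - 1) : ℕ) : ℝ) = ∏ p ∈ s, ((p : ℝ) - 1) := by
    rw [Nat.cast_prod]
    exact Finset.prod_congr rfl fun p hp => by
      rw [Nat.cast_sub (hsp p hp).one_lt.le]; norm_num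
  have : ((c * ∏ p ∈ s, (p - 1) : ℕ) : ℝ) ≤ ((∏ p ∈ s, p : ℕ) : ℝ) := by
    rw [Nat.cast_mul, hcast, Nat.cast_prod]
    exact key
  exact_mod_cast this

lemma pi_small (m : ℕ) (hm : 2 ≤ m) : ∃ K : ℕ, 0 < K ∧ Nat.primeCounting (m * K) < K := by
  obtain ⟨a, ha, hta⟩ := exists_totient (2 * m)
  have hphi : 0 < a.totient := Nat.totient_pos.mpr ha
  have ha4 : 4 ≤ a := by nlinarith
  set n : ℕ := a * (4 * m - 1) with hn
  have e1 : a * (4 * m - 1) + a = 4 * a * m := by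
    have h4 : (4 * m - 1) + 1 = 4 * m := by omega
    calc a * (4 * m - 1) + a = a * ((4 * m - 1) + 1) := by rw [Nat.mul_succ]
      _ = 4 * a * m := by rw [h4]; ring
  have hdivn : n / a = 4 * m - 1 := by rw [hn, Nat.mul_div_cancel_left _ ha]
  have hb := Nat.primeCounting'_add_le ha.ne' (Nat.lt_succ_self a) n
  rw [hdivn] at hb
  have heq : a + 1 + n = m * (4 * a) + 1 := by
    have : m * (4 * a) = 4 * a * m := by ring
    omega
  rw [heq] at hb
  have hcount : Nat.primeCounting' (a + 1) ≤ a + 1 := by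
    unfold Nat.primeCounting'; exact Nat.count_le Nat.Prime
  have hmul : a.totient * (4 * m - 1 + 1) = 2 * (2 * m * a.totient) := by
    have h4 : (4 * m - 1) + 1 = 4 * m := by omega
    rw [h4]; ring
  have hb2 : Nat.primeCounting' (m * (4 * a) + 1) ≤ (a + 1) + 2 * a := by
    refine hb.trans (Nat.add_le_add hcount ?_)
    rw [hmul]; omega
  refine ⟨4 * a, by omega, ?_⟩
  show Nat.primeCounting' (m * (4 * a) + 1) < 4 * a
  omega

theorem stmt16 (m : ℕ) (hm : 2 ≤ m) :
    ∃ n : ℕ, 1 < n ∧ n = m * Nat.primeCounting n := by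
  obtain ⟨K, hK, hKlt⟩ := pi_small m hm
  have hex : ∃ k : ℕ, Nat.primeCounting (m * k) < k := ⟨K, hKlt⟩
  classical
  set k₀ := Nat.find hex with hk0
  have hk₀ : Nat.primeCounting (m * k₀) < k₀ := Nat.find_spec hex
  have h1 : ¬ (Nat.primeCounting (m * 1) < 1) := by
    have : m * 1 ≠ 0 ∧ ¬ (m * 1 ≤ 1) := by omega
    have hpos : 0 < Nat.primeCounting (m * 1) :=
      Nat.pos_of_ne_zero fun h => this.2 (Nat.primeCounting_eq_zero_iff.mp h)
    omega
  have h0 : ¬ (Nat.primeCounting (m * 0) < 0) := by omega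
  have hk₀2 : 2 ≤ k₀ := by
    rcases Nat.lt_or_ge k₀ 2 with h | h
    · interval_cases k₀
      · exact absurd hk₀ h0
      · exact absurd hk₀ h1
    · exact h
  set k := k₀ - 1 with hk
  have hklt : k < k₀ := by omega
  have hge : k ≤ Nat.primeCounting (m * k) := le_of_not_gt (Nat.find_min hex hklt)
  have hle : Nat.primeCounting (m * k) ≤ Nat.primeCounting (m * k₀) :=
    Nat.monotone_primeCounting (Nat.mul_le_mul_left m (by omega))
  have heq : Nat.primeCounting (m * k) = k := by omega
  have h2 : 2 * 1 ≤ m * k := Nat.mul_le_mul hm (by omega)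
  exact ⟨m * k, by omega, by rw [heq]⟩
end

section
/- For every integer m ≥ 7, there exists a positive integer N divisible by m such that π(N) = (N + m^2)/m; consequently, with n = N/m one has π(m·n) = m + n. -/
open Nat Finset

private lemma cbLe (n : ℕ) (hn : 0 < n) :
    Nat.centralBinom n ≤ (2 * n) ^ Nat.primeCounting (2 * n) := by
  have h1 := (Nat.prod_pow_factorization_centralBinom n).symm
  have h2 : ∏ p ∈ range (2*n+1), p ^ (Nat.centralBinom n).factorization p
      = ∏ p ∈ (range (2*n+1)).filter Nat.Prime,
          p ^ (Nat.centralBinom n).factorization p := by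
    refine (Finset.prod_filter_of_ne ?_).symm
    intro x hx hne
    by_contra hnp
    rw [Nat.factorization_eq_zero_of_not_prime _ hnp, pow_zero] at hne
    exact hne rfl
  have h3 : ∏ p ∈ (range (2*n+1)).filter Nat.Prime,
      p ^ (Nat.centralBinom n).factorization p ≤
        (2*n) ^ ((range (2*n+1)).filter Nat.Prime).card := by
    refine Finset.prod_le_pow_card _ _ _ ?_
    intro p _
    exact Nat.pow_factorization_choose_le (by omega)
  have hcard : ((range (2*n+1)).filter Nat.Prime).card = Nat.primeCounting (2*n) := by
    show _ = Nat.count Nat.Prime (2*n+1)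
    rw [Nat.count_eq_card_filter_range]
  rw [h1, h2]
  rw [hcard] at h3
  exact h3

private lemma piLower (j : ℕ) (hj : 0 < j) :
    2 ^ j ≤ j * (Nat.primeCounting (2 ^ j) + 1) := by
  set n := 2 ^ (j - 1) with hn
  have hnpos : 0 < n := Nat.pow_pos (by norm_num)
  have h2n : 2 * n = 2 ^ j := by
    rw [hn, ← _root_.pow_succ']
    congr 1
    omega
  have h4 : 4 ^ n ≤ 2 * n * Nat.centralBinom n :=
    Nat.four_pow_le_two_mul_self_mul_centralBinom n hnpos
  have h5 : (4:ℕ) ^ n ≤ (2 * n) ^ (Nat.primeCounting (2 * n) + 1) := by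
    calc (4:ℕ) ^ n ≤ 2 * n * Nat.centralBinom n := h4
    _ ≤ 2 * n * ((2*n) ^ Nat.primeCounting (2*n)) :=
        Nat.mul_le_mul_left _ (cbLe n hnpos)
    _ = (2*n) ^ (Nat.primeCounting (2*n) + 1) := by ring
  have h6 : (2:ℕ) ^ (2 ^ j) ≤ 2 ^ (j * (Nat.primeCounting (2 ^ j) + 1)) := by
    calc (2:ℕ) ^ (2^j) = 4 ^ n := by
          rw [show (4:ℕ) = 2^2 from rfl, ← pow_mul, ← h2n]
    _ ≤ (2 * n) ^ (Nat.primeCounting (2 * n) + 1) := h5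
    _ = 2 ^ (j * (Nat.primeCounting (2 ^ j) + 1)) := by
          rw [h2n, ← pow_mul]
  exact (Nat.pow_le_pow_iff_right (by norm_num)).mp h6

private lemma piUpper (s x : ℕ) :
    s * Nat.primeCounting x ≤ 2 * x + s * Nat.primeCounting (2 ^ s) := by
  classical
  set T := (range (x+1)).filter (fun p => Nat.Prime p ∧ 2 ^ s < p) with hT
  have hsub : T ⊆ (range (x+1)).filter Nat.Prime := by
    intro p hp
    simp only [hT, mem_filter] at hp ⊢
    exact ⟨hp.1, hp.2.1⟩
  have hprod1 : ∏ p ∈ T, p ≤ primorial x := by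
    refine Finset.prod_le_prod_of_subset_of_one_le' hsub ?_
    intro i hi _
    exact (mem_filter.mp hi).2.one_lt.le
  have hprod2 : (2 ^ s) ^ T.card ≤ ∏ p ∈ T, p := by
    refine Finset.pow_card_le_prod T _ _ ?_
    intro p hp
    exact ((mem_filter.mp hp).2.2).le
  have hexp : (2:ℕ) ^ (s * T.card) ≤ 2 ^ (2 * x) := by
    calc (2:ℕ) ^ (s * T.card) = (2^s)^T.card := by rw [pow_mul]
    _ ≤ ∏ p ∈ T, p := hprod2
    _ ≤ primorial x := hprod1
    _ ≤ 4 ^ x := primorial_le_4_pow x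
    _ = 2 ^ (2*x) := by rw [show (4:ℕ) = 2^2 from rfl, ← pow_mul]
  have hcard : s * T.card ≤ 2 * x := (Nat.pow_le_pow_iff_right (by norm_num)).mp hexp
  have hsplit : Nat.primeCounting x ≤ T.card + Nat.primeCounting (2 ^ s) := by
    have e1 : Nat.primeCounting x = ((range (x+1)).filter Nat.Prime).card := by
      show Nat.count Nat.Prime (x+1) = _
      rw [Nat.count_eq_card_filter_range]
    have e2 : Nat.primeCounting (2^s) = ((range (2^s+1)).filter Nat.Prime).card := by
      show Nat.count Nat.Prime (2^s+1) = _
      rw [Nat.count_eq_card_filter_range]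
    have hsub2 : (range (x+1)).filter Nat.Prime ⊆
        T ∪ (range (2^s+1)).filter Nat.Prime := by
      intro p hp
      simp only [hT, mem_filter, mem_union, mem_range] at hp ⊢
      rcases lt_or_ge (2^s) p with h | h
      · exact Or.inl ⟨hp.1, hp.2, h⟩
      · exact Or.inr ⟨by omega, hp.2⟩
    rw [e1, e2]
    calc ((range (x+1)).filter Nat.Prime).card
        ≤ (T ∪ (range (2^s+1)).filter Nat.Prime).card := Finset.card_le_card hsub2
    _ ≤ T.card + ((range (2^s+1)).filter Nat.Prime).card := Finset.card_union_le _ _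
  calc s * Nat.primeCounting x ≤ s * (T.card + Nat.primeCounting (2^s)) :=
        Nat.mul_le_mul_left _ hsplit
  _ = s * T.card + s * Nat.primeCounting (2^s) := by ring
  _ ≤ 2 * x + s * Nat.primeCounting (2^s) := by omega

private lemma piLeSelf (n : ℕ) : Nat.primeCounting n ≤ n := by
  induction n with
  | zero => simp
  | succ n ih =>
    have h : Nat.primeCounting (n+1) = Nat.primeCounting n + if Nat.Prime (n+1) then 1 else 0 := by
      show Nat.count Nat.Prime (n+2) = _
      rw [Nat.count_succ]; rfl
    rw [h]; split <;> omega

private lemma piNth (i : ℕ) : Nat.primeCounting (Nat.nth Nat.Prime i) = i + 1 := by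
  show Nat.count Nat.Prime (Nat.nth Nat.Prime i + 1) = i + 1
  exact Nat.count_nth_succ_of_infinite Nat.infinite_setOf_prime i

private lemma piTwoPow (j : ℕ) (hj : 0 < j) : 1 ≤ Nat.primeCounting (2 ^ j) := by
  have h2 : (2:ℕ) ≤ 2 ^ j := by
    calc (2:ℕ) = 2^1 := rfl
    _ ≤ 2^j := Nat.pow_le_pow_right (by norm_num) hj
  have h3 : Nat.primeCounting 2 ≤ Nat.primeCounting (2^j) := Nat.monotone_primeCounting h2
  have h1 : Nat.primeCounting 2 = 1 := by
    show Nat.count Nat.Prime 3 = 1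
    rw [Nat.count_succ, Nat.count_succ, Nat.count_succ, Nat.count_zero]
    norm_num
  omega

private lemma pi96 : Nat.primeCounting 96 = 24 := by
  show Nat.count Nat.Prime 97 = 24
  simp only [Nat.count_succ, Nat.count_zero]
  norm_num

private lemma cubeLe (j : ℕ) (hj : 10 ≤ j) : (j+2)^3 ≤ 2^(j+1) := by
  induction j with
  | zero => omega
  | succ n ih =>
    rcases Nat.lt_or_ge n 10 with h | h
    · have hn : n = 9 := by omega
      subst hn; norm_num
    · have h1 := ih h
      have h2 : (n+1+2)^3 ≤ 2*(n+2)^3 := by nlinarith [sq_nonneg n, h]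
      calc (n+1+2)^3 ≤ 2*(n+2)^3 := h2
      _ ≤ 2*2^(n+1) := by omega
      _ = 2^(n+1+1) := by ring


private lemma exA (m : ℕ) (hm : 7 ≤ m) :
    ∃ x, 1 ≤ Nat.primeCounting x ∧ m^2 + x ≤ m * Nat.primeCounting x := by
  rcases Nat.lt_or_ge m 12 with h12 | h12
  · refine ⟨96, ?_, ?_⟩ <;> rw [pi96]
    · norm_num
    · interval_cases m <;> norm_num
  · obtain ⟨j, rfl⟩ : ∃ j, m = j + 2 := ⟨m - 2, by omega⟩
    have hj10 : 10 ≤ j := by omega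
    have hjpos : 0 < j := by omega
    set k1 := Nat.primeCounting (2 ^ j) with hk1
    have hL : 2 ^ j ≤ j * (k1 + 1) := piLower j hjpos
    have hcube : (j+2)^3 ≤ 2 * 2^j := by
      calc (j+2)^3 ≤ 2^(j+1) := cubeLe j hj10
      _ = 2 * 2^j := by ring
    have h1k : 1 ≤ k1 := piTwoPow j hjpos
    refine ⟨2^j, h1k, ?_⟩
    have key : (j+2)*(j+3) ≤ 2*(k1+1) := by
      have c1 : j * ((j+2)*(j+3)) ≤ j * (2*(k1+1)) := by
        calc j * ((j+2)*(j+3)) ≤ (j+2)^3 := by nlinarith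
        _ ≤ 2 * 2^j := hcube
        _ ≤ 2 * (j*(k1+1)) := by omega
        _ = j * (2*(k1+1)) := by ring
      exact Nat.le_of_mul_le_mul_left c1 hjpos
    nlinarith [hL, key]

private lemma exB (m i : ℕ) (hm : 7 ≤ m) (hi : 2^(4*m+1) ≤ i) :
    ¬ (m^2 + Nat.nth Nat.Prime i ≤ (i+1) * m) := by
  intro h
  have hu := piUpper (4*m) (Nat.nth Nat.Prime i)
  rw [piNth] at hu
  set C := 2^(4*m) with hC
  have hps : Nat.primeCounting C ≤ C := piLeSelf _
  have hP : Nat.nth Nat.Prime i ≤ (i+1)*m := by nlinarith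
  have h1 : 4*m*(i+1) ≤ 2*((i+1)*m) + 4*m*C := by
    calc 4*m*(i+1) ≤ 2*Nat.nth Nat.Prime i + 4*m*Nat.primeCounting C := hu
    _ ≤ 2*((i+1)*m) + 4*m*C := by
        have h2 := Nat.mul_le_mul_left (4*m) hps
        omega
  have h2 : 2*m*(i+1) ≤ 2*m*(2*C) := by nlinarith
  have h3 : i+1 ≤ 2*C := Nat.le_of_mul_le_mul_left h2 (by omega)
  have h4 : 2*C ≤ i := by
    have : 2^(4*m+1) = 2*C := by rw [hC, pow_succ]; ring
    omega
  omega


theorem stmt18 (m : ℕ) (hm : 7 ≤ m) :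
    ∃ N : ℕ, 0 < N ∧ m ∣ N ∧ (m : ℤ) * Nat.primeCounting N = N + (m : ℤ) ^ 2 ∧
      Nat.primeCounting (m * (N / m)) = m + N / m := by
  classical
  set P : ℕ → Prop := fun i => m^2 + Nat.nth Nat.Prime i ≤ (i+1)*m with hPdef
  obtain ⟨x, hx1, hx2⟩ := exA m hm
  set i₁ := Nat.primeCounting x - 1 with hi₁def
  have hi₁ : i₁ + 1 = Nat.primeCounting x := by omega
  have hnth1 : Nat.nth Nat.Prime i₁ ≤ x := by
    have hlt : i₁ < Nat.count Nat.Prime (x+1) := by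
      show i₁ < Nat.primeCounting x
      omega
    have := Nat.nth_lt_of_lt_count hlt
    omega
  have hPi₁ : P i₁ := by
    show m^2 + Nat.nth Nat.Prime i₁ ≤ (i₁+1)*m
    calc m^2 + Nat.nth Nat.Prime i₁ ≤ m^2 + x := by omega
    _ ≤ m * Nat.primeCounting x := hx2
    _ = (i₁+1)*m := by rw [← hi₁]; ring
  set K := 2^(4*m+1) with hK
  have hbd : ∀ i, K ≤ i → ¬ P i := fun i hi => exB m i hm hi
  have hi₁K : i₁ ≤ K := by
    by_contra h
    exact hbd i₁ (by omega) hPi₁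
  set i₀ := Nat.findGreatest P K with hi₀def
  have hPi₀ : P i₀ := Nat.findGreatest_spec hi₁K hPi₁
  have hnot : ¬ P (i₀ + 1) := by
    rcases le_or_gt (i₀+1) K with h | h
    · exact Nat.findGreatest_is_greatest (Nat.lt_succ_self i₀) h
    · exact hbd _ (by omega)
  have h1 : m^2 + Nat.nth Nat.Prime i₀ ≤ (i₀+1)*m := hPi₀
  have h2 : (i₀+2)*m < m^2 + Nat.nth Nat.Prime (i₀+1) := by
    have := hnot
    show _ < _
    by_contra hcon
    push_neg at hcon
    exact hnot (by simpa [hPdef] using hcon)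
  have hp0 : 2 ≤ Nat.nth Nat.Prime i₀ := (Nat.prime_nth_prime i₀).two_le
  have hk : m + 1 ≤ i₀ + 1 := by
    by_contra hcon
    push_neg at hcon
    have hle : (i₀+1)*m ≤ m*m := Nat.mul_le_mul_right m (by omega)
    nlinarith [h1, hp0, hle]
  set n := i₀ + 1 - m with hndef
  have hn1 : 1 ≤ n := by omega
  have hnm : m + n = i₀ + 1 := by omega
  set N := m * n with hNdef
  have hNval : N + m^2 = (i₀+1)*m := by
    calc N + m^2 = m * (n + m) := by rw [hNdef]; ring
    _ = m * (i₀ + 1) := by rw [show n + m = i₀ + 1 by omega]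
    _ = (i₀+1)*m := by ring
  have hge : Nat.nth Nat.Prime i₀ ≤ N := by omega
  have hlt : N + 1 ≤ Nat.nth Nat.Prime (i₀+1) := by
    have e : (i₀+2)*m = (i₀+1)*m + m := by ring
    omega
  have hπ : Nat.primeCounting N = i₀ + 1 := by
    have hub : Nat.primeCounting N ≤ i₀ + 1 := by
      have hmono := Nat.count_monotone Nat.Prime hlt
      have hcn : Nat.count Nat.Prime (Nat.nth Nat.Prime (i₀+1)) = i₀+1 :=
        Nat.count_nth_of_infinite Nat.infinite_setOf_prime (i₀+1)
      show Nat.count Nat.Prime (N+1) ≤ i₀ + 1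
      omega
    have hlb : i₀ + 1 ≤ Nat.primeCounting N := by
      have := Nat.monotone_primeCounting hge
      rw [piNth] at this
      omega
    omega
  have hdiv : N / m = n := Nat.mul_div_cancel_left n (by omega)
  refine ⟨N, ?_, ⟨n, rfl⟩, ?_, ?_⟩
  · exact Nat.mul_pos (by omega) hn1
  · rw [hπ]
    have := hNval
    zify at this
    push_cast
    linarith
  · rw [hdiv, hπ]
    omega
end
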